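/- Let m, n, t be integers with m > n ≥ 3, t ≥ 1 and 2t < m. Then the t+2 polynomials x^n·(1+x)^{m−n}, T((1+x)^m), T^2((1+x)^m), T^4((1+x)^m), …, T^{2t}((1+x)^m) are linearly independent over ℚ in ℚ[x]. -/

import Mathlib

open Polynomial

/-- The operator `T p = x · p'` on `ℚ[x]`. -/
noncomputable def T : Polynomial ℚ → Polynomial ℚ := fun p => X * derivative p

lemma coeff_T (p : Polynomial ℚ) (k : ℕ) : (T p).coeff k = k * p.coeff k := by
  cases k with
  | zero => simp [T]
  | succ k =>
    simp only [T, coeff_X_mul, coeff_derivative]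
    push_cast
    ring

lemma coeff_T_iter (j : ℕ) (p : Polynomial ℚ) (k : ℕ) :
    ((T^[j]) p).coeff k = (k : ℚ) ^ j * p.coeff k := by
  induction j generalizing p with
  | zero => simp
  | succ j ih => rw [Function.iterate_succ_apply, ih, coeff_T]; ring

lemma prod_cast_descFactorial (K e : ℕ) (h : e ≤ K) :
    (∏ j ∈ Finset.range e, ((K : ℚ) - j)) = (K.descFactorial e : ℚ) := by
  induction e with
  | zero => simp
  | succ e ih =>
    rw [Finset.prod_range_succ, ih (by omega), Nat.descFactorial_succ]
    have h2 : ((K - e : ℕ) : ℚ) = (K : ℚ) - e := by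
      have : e ≤ K := by omega
      push_cast [this]; ring
    rw [Nat.cast_mul, h2]; ring

lemma prod_neg_one (e : ℕ) :
    (∏ j ∈ Finset.range e, ((-1 : ℚ) - j)) = (-1) ^ e * (e.factorial : ℚ) := by
  induction e with
  | zero => simp
  | succ e ih =>
    rw [Finset.prod_range_succ, ih, Nat.factorial_succ]
    push_cast; ring

lemma prod_neg_two (e : ℕ) :
    (∏ j ∈ Finset.range e, ((-2 : ℚ) - j)) = (-1) ^ e * ((e + 1).factorial : ℚ) := by
  induction e with
  | zero => simp
  | succ e ih =>
    rw [Finset.prod_range_succ, ih, Nat.factorial_succ]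
    push_cast [Nat.factorial_succ]; ring

lemma desc_choose (m n k : ℕ) (hnk : n ≤ k) (hkm : k ≤ m) :
    k.descFactorial n * m.choose k = (m - n).choose (k - n) * m.descFactorial n := by
  have hmul := Nat.choose_mul (n := m) hnk
  calc k.descFactorial n * m.choose k = n.factorial * (m.choose k * k.choose n) := by
        rw [Nat.descFactorial_eq_factorial_mul_choose]; ring
    _ = n.factorial * (m.choose n * (m - n).choose (k - n)) := by rw [hmul]
    _ = (m - n).choose (k - n) * m.descFactorial n := by
        rw [Nat.descFactorial_eq_factorial_mul_choose]; ring


/-- Let `m > n ≥ 3`, `t ≥ 1` and `2t < m`.  Then the `t+2` polynomials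
`x^n·(1+x)^{m−n}, T((1+x)^m), T^2((1+x)^m), T^4((1+x)^m), …, T^{2t}((1+x)^m)` are linearly
independent over `ℚ`: any vanishing `ℚ`-linear combination has all coefficients zero. -/
theorem stmt5 (m n t : ℕ) (hmn : n < m) (hn : 3 ≤ n) (ht : 1 ≤ t) (htm : 2 * t < m)
    (a β₁ : ℚ) (β : ℕ → ℚ)
    (h : C a * (X ^ n * (1 + X) ^ (m - n)) + C β₁ * T^[1] ((1 + X) ^ m)
        + ∑ i ∈ Finset.Icc 1 t, C (β (2 * i)) * T^[2 * i] ((1 + X) ^ m) = 0) :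
    a = 0 ∧ β₁ = 0 ∧ ∀ i : ℕ, 1 ≤ i → i ≤ t → β (2 * i) = 0 := by
  rw [show (X : Polynomial ℚ) ^ n * (1 + X) ^ (m - n)
      = (1 + X) ^ (m - n) * X ^ n from mul_comm _ _] at h
  -- coefficient equations
  have hcoeff : ∀ k : ℕ,
      a * (if n ≤ k then (((m - n).choose (k - n) : ℚ)) else 0)
      + β₁ * (k : ℚ) * (m.choose k : ℚ)
      + (∑ i ∈ Finset.Icc 1 t, β (2 * i) * (k : ℚ) ^ (2 * i)) * (m.choose k : ℚ) = 0 := by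
    intro k
    have hc := congrArg (fun p => Polynomial.coeff p k) h
    simp only [coeff_add, coeff_C_mul, finset_sum_coeff, coeff_zero, coeff_T_iter,
      coeff_one_add_X_pow, coeff_mul_X_pow', pow_one] at hc
    simp only [← mul_assoc] at hc
    rw [← Finset.sum_mul] at hc
    convert hc using 3
  -- the auxiliary polynomials
  set Qp : Polynomial ℚ := C β₁ * X + ∑ i ∈ Finset.Icc 1 t, C (β (2 * i)) * X ^ (2 * i)
    with hQp
  set Dp : Polynomial ℚ := ∏ j ∈ Finset.range n, (X - C (j : ℚ)) with hDp
  set dm : ℚ := (m.descFactorial n : ℚ) with hdm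
  set P : Polynomial ℚ := C dm * Qp + C a * Dp with hP
  have hdm0 : dm ≠ 0 := by
    rw [hdm]
    have hpos : 0 < m.descFactorial n := by
      rw [Nat.descFactorial_eq_factorial_mul_choose]
      exact Nat.mul_pos n.factorial_pos (Nat.choose_pos hmn.le)
    exact_mod_cast hpos.ne'
  have hchoose0 : ∀ k : ℕ, k ≤ m → ((m.choose k : ℚ)) ≠ 0 := by
    intro k hk
    exact_mod_cast (Nat.choose_pos hk).ne'
  -- eval of P and Qp
  have hQeval : ∀ x : ℚ, Qp.eval x = β₁ * x + ∑ i ∈ Finset.Icc 1 t, β (2 * i) * x ^ (2 * i) := by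
    intro x; simp [hQp, eval_finset_sum]
  have hPeval : ∀ x : ℚ,
      P.eval x = dm * Qp.eval x + a * ∏ j ∈ Finset.range n, (x - (j : ℚ)) := by
    intro x; simp [hP, hDp, eval_prod]
  -- P vanishes at 0, 1, ..., m
  have hP0 : ∀ k : ℕ, k ≤ m → P.eval (k : ℚ) = 0 := by
    intro k hkm
    have hc := hcoeff k
    rw [hPeval, hQeval]
    by_cases hnk : n ≤ k
    · rw [if_pos hnk] at hc
      rw [prod_cast_descFactorial k n hnk]
      have hid : (k.descFactorial n : ℚ) * (m.choose k : ℚ)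
          = ((m - n).choose (k - n) : ℚ) * dm := by
        rw [hdm]; exact_mod_cast congrArg (Nat.cast : ℕ → ℚ) (desc_choose m n k hnk hkm)
      have hz : (dm * (β₁ * (k : ℚ) + ∑ i ∈ Finset.Icc 1 t, β (2 * i) * (k : ℚ) ^ (2 * i))
          + a * (k.descFactorial n : ℚ)) * (m.choose k : ℚ) = 0 := by
        linear_combination dm * hc + a * hid
      exact (mul_eq_zero.mp hz).resolve_right (hchoose0 k hkm)
    · rw [if_neg hnk] at hc
      have hq0 : β₁ * (k : ℚ) + ∑ i ∈ Finset.Icc 1 t, β (2 * i) * (k : ℚ) ^ (2 * i) = 0 := by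
        have hz : (β₁ * (k : ℚ)
            + ∑ i ∈ Finset.Icc 1 t, β (2 * i) * (k : ℚ) ^ (2 * i)) * (m.choose k : ℚ) = 0 := by
          linear_combination hc
        exact (mul_eq_zero.mp hz).resolve_right (hchoose0 k hkm)
      have hprod0 : (∏ j ∈ Finset.range n, ((k : ℚ) - j)) = 0 :=
        Finset.prod_eq_zero (i := k) (Finset.mem_range.mpr (by omega)) (by ring)
      rw [hq0, hprod0]; ring
  -- degree bound, P = 0
  have hPz : P = 0 := by
    apply Polynomial.eq_zero_of_natDegree_lt_card_of_eval_eq_zero' P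
      ((Finset.range (m + 1)).image (Nat.cast : ℕ → ℚ))
    · intro x hx
      obtain ⟨k, hk, rfl⟩ := Finset.mem_image.mp hx
      exact hP0 k (by simpa using Finset.mem_range.mp hk |> Nat.lt_succ_iff.mp)
    · rw [Finset.card_image_of_injective _ Nat.cast_injective, Finset.card_range]
      have h1 : Qp.natDegree ≤ 2 * t := by
        apply le_trans (natDegree_add_le _ _)
        apply max_le
        · exact le_trans (natDegree_C_mul_le _ _) (by simp [natDegree_X]; omega)
        · apply Polynomial.natDegree_sum_le_of_forall_le
          intro i hi
          exact le_trans (natDegree_C_mul_le _ _)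
            (by rw [natDegree_X_pow]; exact Nat.mul_le_mul_left 2 (Finset.mem_Icc.mp hi).2)
      have h2 : Dp.natDegree ≤ n := by
        refine le_trans (natDegree_prod_le _ _) ?_
        simp only [natDegree_X_sub_C]
        simp
      calc P.natDegree ≤ max (C dm * Qp).natDegree (C a * Dp).natDegree :=
            natDegree_add_le _ _
        _ ≤ max Qp.natDegree Dp.natDegree :=
            max_le_max (natDegree_C_mul_le _ _) (natDegree_C_mul_le _ _)
        _ < m + 1 := by
            apply max_lt <;> omega
  -- evaluate at 1, 2, -1, -2
  have hPzeval : ∀ x : ℚ, dm * Qp.eval x + a * ∏ j ∈ Finset.range n, (x - (j : ℚ)) = 0 := by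
    intro x; rw [← hPeval, hPz, eval_zero]
  have hQ1 : Qp.eval 1 = 0 := by
    have := hPzeval 1
    rw [Finset.prod_eq_zero (i := 1) (Finset.mem_range.mpr (by omega)) (by norm_num)] at this
    have h' : dm * Qp.eval 1 = 0 := by linarith [this]
    exact (mul_eq_zero.mp h').resolve_left hdm0
  have hQ2 : Qp.eval 2 = 0 := by
    have := hPzeval 2
    rw [Finset.prod_eq_zero (i := 2) (Finset.mem_range.mpr (by omega)) (by norm_num)] at this
    have h' : dm * Qp.eval 2 = 0 := by linarith [this]
    exact (mul_eq_zero.mp h').resolve_left hdm0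
  have hA : dm * Qp.eval (-1) + a * ((-1) ^ n * (n.factorial : ℚ)) = 0 := by
    have := hPzeval (-1); rwa [prod_neg_one] at this
  have hB : dm * Qp.eval (-2) + a * ((-1) ^ n * ((n + 1).factorial : ℚ)) = 0 := by
    have := hPzeval (-2); rwa [prod_neg_two] at this
  -- structure of Qp evals
  have hev1 : Qp.eval 1 = β₁ + ∑ i ∈ Finset.Icc 1 t, β (2 * i) := by
    rw [hQeval]; simp
  have hevm1 : Qp.eval (-1) = -β₁ + ∑ i ∈ Finset.Icc 1 t, β (2 * i) := by
    rw [hQeval]; simp [pow_mul]; try ring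
  have hev2 : Qp.eval 2 = 2 * β₁ + ∑ i ∈ Finset.Icc 1 t, β (2 * i) * 4 ^ i := by
    rw [hQeval]
    norm_num [pow_mul]
    try ring
  have hevm2 : Qp.eval (-2) = -2 * β₁ + ∑ i ∈ Finset.Icc 1 t, β (2 * i) * 4 ^ i := by
    rw [hQeval]
    norm_num [pow_mul]
    try ring
  have hQm1 : Qp.eval (-1) = -2 * β₁ := by
    rw [hevm1]
    have := hev1.symm.trans hQ1
    linarith
  have hQm2 : Qp.eval (-2) = -4 * β₁ := by
    rw [hevm2]
    have := hev2.symm.trans hQ2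
    linarith
  rw [hQm1] at hA
  rw [hQm2, Nat.factorial_succ, Nat.cast_mul, Nat.cast_add_one] at hB
  -- derive β₁ = 0
  have hbz : dm * (β₁ * (2 - 2 * (n : ℚ))) = 0 := by
    linear_combination ((n : ℚ) + 1) * hA - hB
  have hn3 : (3 : ℚ) ≤ (n : ℚ) := by exact_mod_cast hn
  have hb1 : β₁ = 0 := by
    rcases mul_eq_zero.mp hbz with h' | h'
    · exact absurd h' hdm0
    · rcases mul_eq_zero.mp h' with h'' | h''
      · exact h''
      · exfalso; linarith
  have ha : a = 0 := by
    rw [hb1] at hA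
    have h' : a * ((-1) ^ n * (n.factorial : ℚ)) = 0 := by linarith
    rcases mul_eq_zero.mp h' with h'' | h''
    · exact h''
    · exfalso
      rcases mul_eq_zero.mp h'' with h3 | h3
      · exact pow_ne_zero n (by norm_num) h3
      · exact Nat.cast_ne_zero.mpr n.factorial_ne_zero h3
  refine ⟨ha, hb1, ?_⟩
  -- Qp = 0
  have hQz : Qp = 0 := by
    have h' : C dm * Qp = 0 := by
      have := hPz
      rw [hP, ha] at this
      simpa using this
    rcases mul_eq_zero.mp h' with h'' | h''
    · exact absurd (C_eq_zero.mp h'') hdm0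
    · exact h''
  intro i h1i hit
  have hco : Qp.coeff (2 * i) = β (2 * i) := by
    rw [hQp]
    simp only [coeff_add, coeff_C_mul, finset_sum_coeff, coeff_X_pow, coeff_X,
      mul_ite, mul_one, mul_zero]
    rw [if_neg (by omega), Finset.sum_eq_single_of_mem i (Finset.mem_Icc.mpr ⟨h1i, hit⟩)
      (fun j _ hji => by rw [if_neg (by omega)]), if_pos rfl]
    ring
  rw [← hco, hQz, coeff_zero]
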